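/- Let G be a connected simple graph on n ≥ 3 vertices with m edges. If σₙ₋₁(LI(G)) > σₙ(LI(G)), then σₙ(LI(G)) ≠ μ₁(G) − 2m/n, i.e. the smallest singular value of the LI-matrix is not attained by the largest Laplacian eigenvalue. -/

import Mathlib

open Finset SimpleGraph

attribute [local instance] Classical.propDecidable

/-- The `i`-th largest value of the tuple `f` (values sorted in non-increasing order). -/
noncomputable def sortDesc {n : ℕ} (f : Fin n → ℝ) : Fin n → ℝ :=
  fun i => f (Tuple.sort f i.rev)

/-- The Laplacian eigenvalues of `G`, in non-increasing order:
`lapEig G 0 = μ₁ ≥ lapEig G 1 = μ₂ ≥ ⋯`. -/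
noncomputable def lapEig {n : ℕ} (G : SimpleGraph (Fin n)) : Fin n → ℝ :=
  sortDesc (SimpleGraph.posSemidef_lapMatrix ℝ G).isHermitian.eigenvalues

/-- The number of edges of `G`. -/
noncomputable def numEdges {n : ℕ} (G : SimpleGraph (Fin n)) : ℕ :=
  G.edgeFinset.card

/-- The singular values of the LI-matrix `LI(G) = L(G) - (2m/n)·Iₙ`, in non-increasing
order; they are the values `|μᵢ - 2m/n|` sorted non-increasingly. -/
noncomputable def LIsv {n : ℕ} (G : SimpleGraph (Fin n)) : Fin n → ℝ :=
  sortDesc (fun i => |lapEig G i - 2 * numEdges G / n|)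

/-- The Ky Fan `k`-norm of the LI-matrix of `G`: the sum of the `k` largest singular
values of `LI(G)`. -/
noncomputable def kyFanLI {n : ℕ} (G : SimpleGraph (Fin n)) (k : ℕ) : ℝ :=
  ∑ i ∈ Finset.univ.filter (fun i : Fin n => (i : ℕ) < k), LIsv G i

/-- `S_k(L(G))`, the sum of the `k` largest Laplacian eigenvalues of `G`. -/
noncomputable def lapSum {n : ℕ} (G : SimpleGraph (Fin n)) (k : ℕ) : ℝ :=
  ∑ i ∈ Finset.univ.filter (fun i : Fin n => (i : ℕ) < k), lapEig G i


lemma trace_eq_sum_eig {n : ℕ} (A : Matrix (Fin n) (Fin n) ℝ) (hA : A.IsHermitian) :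
    A.trace = ∑ i, hA.eigenvalues i := by
  simpa using hA.trace_eq_sum_eigenvalues

lemma lap_trace {n : ℕ} (G : SimpleGraph (Fin n)) :
    (G.lapMatrix ℝ).trace = 2 * G.edgeFinset.card := by
  have key : (G.lapMatrix ℝ).trace = ∑ i : Fin n, (G.degree i : ℝ) := by
    simp [SimpleGraph.lapMatrix, SimpleGraph.degMatrix, Matrix.trace, Matrix.diag]
  rw [key, ← Nat.cast_sum, SimpleGraph.sum_degrees_eq_twice_card_edges]
  push_cast; ring

lemma sortDesc_sum {n : ℕ} (f : Fin n → ℝ) : ∑ i, sortDesc f i = ∑ i, f i := by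
  have : ∀ i, sortDesc f i = f ((Fin.revPerm.trans (Tuple.sort f)) i) := fun i => rfl
  simp_rw [this]
  exact Equiv.sum_comp _ f

lemma sortDesc_antitone {n : ℕ} (f : Fin n → ℝ) : Antitone (sortDesc f) := by
  intro i j hij
  exact Tuple.monotone_sort f (Fin.rev_le_rev.mpr hij)


set_option maxHeartbeats 2000000 in
/-- If `G` is a connected simple graph on `n ≥ 3` vertices with `m` edges
and `σₙ₋₁(LI(G)) > σₙ(LI(G))`, then `σₙ(LI(G)) ≠ μ₁(G) - 2m/n`. -/
theorem stmt_6 {n : ℕ} (hn : 3 ≤ n) (G : SimpleGraph (Fin n)) (hcon : G.Connected)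
    (h : LIsv G ⟨n - 1, by omega⟩ < LIsv G ⟨n - 2, by omega⟩) :
    LIsv G ⟨n - 1, by omega⟩ ≠ lapEig G ⟨0, by omega⟩ - 2 * (numEdges G : ℝ) / n := by
  intro heq
  -- safe zone: facts about lapEig
  have hmax : ∀ j : Fin n, lapEig G j ≤ lapEig G ⟨0, by omega⟩ := by
    intro j
    apply sortDesc_antitone
    rw [Fin.le_def]; show 0 ≤ (j : ℕ); omega
  have hsum : ∑ i, lapEig G i = 2 * ((numEdges G : ℝ)) := by
    have h1 : ∑ i, lapEig G i =
        ∑ i, (SimpleGraph.posSemidef_lapMatrix ℝ G).isHermitian.eigenvalues i :=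
      sortDesc_sum _
    rw [h1, ← trace_eq_sum_eig, lap_trace, numEdges]
  -- opaque abbreviations
  obtain ⟨c, hcdef⟩ : ∃ c : ℝ, c = 2 * (numEdges G : ℝ) / n := ⟨_, rfl⟩
  obtain ⟨g, hgdef⟩ : ∃ g : Fin n → ℝ, g = fun i => |lapEig G i - c| := ⟨_, rfl⟩
  have hLI : LIsv G = sortDesc g := by rw [hgdef, hcdef]; rfl
  obtain ⟨s, hmono, happ⟩ : ∃ s : Equiv.Perm (Fin n), Monotone (g ∘ s) ∧
      ∀ i, sortDesc g i = g (s i.rev) :=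
    ⟨Tuple.sort g, Tuple.monotone_sort g, fun _ => rfl⟩
  have habs : ∀ i, g i = |lapEig G i - c| := by rw [hgdef]; exact fun _ => rfl
  have hrev1 : (⟨n - 1, by omega⟩ : Fin n).rev = ⟨0, by omega⟩ := by
    ext; simp [Fin.val_rev]; omega
  have hrev2 : (⟨n - 2, by omega⟩ : Fin n).rev = ⟨1, by omega⟩ := by
    ext; simp [Fin.val_rev]; omega
  have hσ : LIsv G ⟨n - 1, by omega⟩ = g (s ⟨0, by omega⟩) :=
    (congrFun hLI _).trans ((happ _).trans (congrArg (fun j => g (s j)) hrev1))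
  have hτ : LIsv G ⟨n - 2, by omega⟩ = g (s ⟨1, by omega⟩) :=
    (congrFun hLI _).trans ((happ _).trans (congrArg (fun j => g (s j)) hrev2))
  obtain ⟨σ, hσdef⟩ : ∃ x : ℝ, x = g (s ⟨0, by omega⟩) := ⟨_, rfl⟩
  have hσ0 : 0 ≤ σ := by
    have h0 : 0 ≤ g (s ⟨0, by omega⟩) := by rw [habs]; exact abs_nonneg _
    rw [hσdef]; exact h0
  have hlt : σ < g (s ⟨1, by omega⟩) :=
    calc σ = LIsv G ⟨n - 1, by omega⟩ := hσdef.trans hσ.symm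
      _ < LIsv G ⟨n - 2, by omega⟩ := h
      _ = g (s ⟨1, by omega⟩) := hτ
  have heq' : σ = lapEig G ⟨0, by omega⟩ - c := by
    have hc' : lapEig G ⟨0, by omega⟩ - 2 * (numEdges G : ℝ) / n
        = lapEig G ⟨0, by omega⟩ - c := by rw [hcdef]
    exact (hσdef.trans hσ.symm).trans (heq.trans hc')
  have hterm : ∀ i : Fin n, lapEig G (s i) ≤ if (i : ℕ) = 0 then c + σ else c - σ := by
    intro i
    by_cases h0 : (i : ℕ) = 0
    · rw [if_pos h0]
      linarith [hmax (s i), heq']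
    · rw [if_neg h0]
      have h1 : g (s ⟨1, by omega⟩) ≤ g (s i) := by
        apply hmono
        rw [Fin.le_def]; show 1 ≤ (i : ℕ); omega
      have h2 : σ < |lapEig G (s i) - c| := by
        rw [← habs]; exact lt_of_lt_of_le hlt h1
      have h3 : lapEig G (s i) - c ≤ σ := by linarith [hmax (s i), heq']
      rcases abs_cases (lapEig G (s i) - c) with ⟨he, _⟩ | ⟨he, _⟩ <;>
        rw [he] at h2 <;> linarith
  have hstrict : lapEig G (s ⟨1, by omega⟩) <
      if ((⟨1, by omega⟩ : Fin n) : ℕ) = 0 then c + σ else c - σ := by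
    rw [if_neg (by simp)]
    have h2 : σ < |lapEig G (s ⟨1, by omega⟩) - c| := by rw [← habs]; exact hlt
    have h3 : lapEig G (s ⟨1, by omega⟩) - c ≤ σ := by
      linarith [hmax (s ⟨1, by omega⟩), heq']
    rcases abs_cases (lapEig G (s ⟨1, by omega⟩) - c) with ⟨he, _⟩ | ⟨he, _⟩ <;>
      rw [he] at h2 <;> linarith
  have hlhs : ∑ i : Fin n, lapEig G (s i) = 2 * ((numEdges G : ℝ)) := by
    rw [Equiv.sum_comp s (lapEig G), hsum]
  have hltsum : (2 : ℝ) * (numEdges G : ℝ) <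
      ∑ i : Fin n, (if (i : ℕ) = 0 then c + σ else c - σ) := by
    rw [← hlhs]
    exact Finset.sum_lt_sum (fun i _ => hterm i) ⟨⟨1, by omega⟩, Finset.mem_univ _, hstrict⟩
  have hrhs : ∑ i : Fin n, (if (i : ℕ) = 0 then c + σ else c - σ)
      = n * (c - σ) + 2 * σ := by
    have hrw : ∀ i : Fin n, (if (i : ℕ) = 0 then c + σ else c - σ)
        = (c - σ) + (if i = (⟨0, by omega⟩ : Fin n) then 2 * σ else 0) := by
      intro i
      by_cases h0 : (i : ℕ) = 0
      · rw [if_pos h0, if_pos (Fin.ext h0)]; ring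
      · rw [if_neg h0, if_neg (fun hh => h0 (by rw [hh]))]; ring
    simp_rw [hrw]
    rw [Finset.sum_add_distrib, Finset.sum_const, Finset.card_univ, Fintype.card_fin,
      Finset.sum_ite_eq' Finset.univ, if_pos (Finset.mem_univ _), nsmul_eq_mul]
  have hnc : (n : ℝ) * c = 2 * (numEdges G : ℝ) := by
    rw [hcdef]; field_simp
  have hn3 : (3 : ℝ) ≤ (n : ℝ) := by exact_mod_cast hn
  rw [hrhs] at hltsum
  nlinarith [hσ0, hn3, hnc]
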